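/- Let v be a realizable valuated matroid of rank r+1 on E = {0,…,n} given by nonzero vectors f₀,…,fₙ ∈ (K^{r+1})*, let B = {b₀,…,b_r} be a basis (v(B) ≠ ∞), and let u = (u₀,…,uₙ) ∈ ℝ^{n+1} be a point of the tropical linear space such that B is a basis of the initial matroid at u (i.e., B minimizes v(σ) − Σ_{i∈σ} u_i over all (r+1)-subsets σ). Then for every k ∈ E \ B, writing f_k = Σ_{i∈B} λᵢ fᵢ, we have u_k = min_{i∈B} (val(λᵢ) + u_i). Equivalently, the seminorm diagonalized by B with weights (u_b)_{b∈B} satisfies −log‖f_k‖ = u_k for all k ∈ E. -/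
import Mathlib


/-- The minimum of `g` over `τ` is "attained at least twice": either all
values are `∞`, or at least two distinct indices realize a finite minimum. -/
def MinTwice {E : Type*} (τ : Finset E) (g : E → WithTop ℝ) : Prop :=
  (∀ e ∈ τ, g e = ⊤) ∨
    ∃ e₁ ∈ τ, ∃ e₂ ∈ τ, e₁ ≠ e₂ ∧ g e₁ = g e₂ ∧ g e₁ ≠ ⊤ ∧ ∀ e ∈ τ, g e₁ ≤ g e

/-- The value `val(det[f_a | a ∈ A])` associated to an `(r+1)`-subset `A` of
column indices of the family `f`, with the convention that subsets of the
wrong cardinality get value `∞`. -/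
noncomputable def valMat {K : Type*} [Field K] {n r : ℕ} (val : K → WithTop ℝ)
    (f : Fin (n + 1) → Fin (r + 1) → K) (A : Finset (Fin (n + 1))) : WithTop ℝ :=
  if hA : A.card = r + 1 then
    val (Matrix.det (Matrix.of fun i j => f (A.orderIsoOfFin hA j).1 i))
  else ⊤

section Aux

variable {K : Type*} [Field K] {n r : ℕ} (val : K → WithTop ℝ)

lemma val_neg_one (hval1 : val 1 = 0)
    (hvalmul : ∀ x y : K, val (x * y) = val x + val y) : val (-1 : K) = 0 := by
  have h : val (-1 : K) + val (-1 : K) = 0 := by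
    rw [← hvalmul, neg_mul_neg, one_mul, hval1]
  rcases eq_or_ne (val (-1 : K)) ⊤ with h' | h'
  · rw [h', top_add] at h; exact absurd h (by simp)
  · obtain ⟨a, ha⟩ := WithTop.ne_top_iff_exists.mp h'
    rw [← ha] at h ⊢
    have h2 : a + a = 0 := by exact_mod_cast h
    have h3 : a = 0 := by linarith
    rw [h3]; rfl

lemma val_sign_mul (hval1 : val 1 = 0)
    (hvalmul : ∀ x y : K, val (x * y) = val x + val y)
    (ε : ℤˣ) (x : K) : val (((ε : ℤ) : K) * x) = val x := by
  rcases Int.units_eq_one_or ε with h | h <;> subst h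
  · norm_num
  · have : (((-1 : ℤˣ) : ℤ) : K) * x = (-1 : K) * x := by norm_num
    rw [this, hvalmul, val_neg_one val hval1 hvalmul, zero_add]

/-- determinant of the matrix whose *rows* are `f (σ j)`. -/
noncomputable def rowsDet (f : Fin (n + 1) → Fin (r + 1) → K)
    (σ : Fin (r + 1) → Fin (n + 1)) : K :=
  Matrix.det (Matrix.of fun j i => f (σ j) i)

lemma valMat_eq_rowsDet (f : Fin (n + 1) → Fin (r + 1) → K)
    (A : Finset (Fin (n + 1))) (hA : A.card = r + 1) :
    valMat val f A = val (rowsDet f (fun j => (A.orderIsoOfFin hA j).1)) := by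
  rw [valMat, dif_pos hA, rowsDet]
  congr 1
  rw [← Matrix.det_transpose]
  rfl

lemma rowsDet_comp_perm (f : Fin (n + 1) → Fin (r + 1) → K)
    (σ : Fin (r + 1) → Fin (n + 1)) (π : Equiv.Perm (Fin (r + 1))) :
    rowsDet f (σ ∘ π) = ((Equiv.Perm.sign π : ℤ) : K) * rowsDet f σ := by
  unfold rowsDet
  have h : (Matrix.of fun j i => f ((σ ∘ π) j) i) =
      (Matrix.of fun j i => f (σ j) i).submatrix π id := rfl
  rw [h, Matrix.det_permute]

lemma val_rowsDet_range_eq (hval1 : val 1 = 0)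
    (hvalmul : ∀ x y : K, val (x * y) = val x + val y)
    (f : Fin (n + 1) → Fin (r + 1) → K)
    (σ₁ σ₂ : Fin (r + 1) → Fin (n + 1))
    (h1 : Function.Injective σ₁)
    (hr : Set.range σ₁ = Set.range σ₂) (h2 : Function.Injective σ₂) :
    val (rowsDet f σ₂) = val (rowsDet f σ₁) := by
  set π : Equiv.Perm (Fin (r + 1)) :=
    (Equiv.ofInjective σ₂ h2).trans ((Equiv.setCongr hr.symm).trans
      (Equiv.ofInjective σ₁ h1).symm) with hπ
  have hcomp : σ₂ = σ₁ ∘ π := by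
    funext j
    show σ₂ j = σ₁ (π j)
    rw [hπ]
    simp only [Equiv.trans_apply]
    rw [Equiv.apply_ofInjective_symm h1]
    rfl
  rw [hcomp, rowsDet_comp_perm, val_sign_mul val hval1 hvalmul]

end Aux

/-- Local section computation: if `u` is a point of the tropical linear space of
the realizable valuated matroid of `f₀,…,fₙ` and `B` is a basis of the initial
matroid at `u`, then for `k ∉ B`, writing `f_k = ∑_{i ∈ B} λᵢ fᵢ`, one has
`u_k = min_{i ∈ B} (val(λᵢ) + uᵢ)`; i.e., the seminorm diagonalized by `B` with
weights `(u_b)` satisfies `−log‖f_k‖ = u_k`. -/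
theorem local_section_is_right_inverse
    {K : Type*} [Field K] (n r : ℕ)
    (val : K → WithTop ℝ)
    (hval0 : val 0 = ⊤) (hval1 : val 1 = 0)
    (hvalmul : ∀ x y : K, val (x * y) = val x + val y)
    (hvaladd : ∀ x y : K, min (val x) (val y) ≤ val (x + y))
    (f : Fin (n + 1) → Fin (r + 1) → K) (hf : ∀ i, f i ≠ 0)
    (u : Fin (n + 1) → ℝ)
    (htrop : ∀ τ : Finset (Fin (n + 1)), τ.card = r + 2 →
      MinTwice τ (fun e => valMat val f (τ.erase e) + (u e : WithTop ℝ)))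
    (B : Finset (Fin (n + 1))) (hB : B.card = r + 1)
    (hBbase : valMat val f B ≠ ⊤)
    (hinit : ∀ σ : Finset (Fin (n + 1)), σ.card = r + 1 →
      valMat val f B + ((∑ i ∈ σ, u i : ℝ) : WithTop ℝ) ≤
        valMat val f σ + ((∑ i ∈ B, u i : ℝ) : WithTop ℝ))
    (k : Fin (n + 1)) (hk : k ∉ B)
    (lam : Fin (n + 1) → K) (hrep : f k = ∑ b ∈ B, lam b • f b) :
    (u k : WithTop ℝ) =
      B.inf' (Finset.card_pos.mp (by omega))
        (fun i => val (lam i) + (u i : WithTop ℝ)) := by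
  classical
  have hkB : ∀ i, i ∈ B → k ∉ B.erase i := fun i _ h => hk (Finset.mem_of_mem_erase h)
  have hcard' : ∀ i ∈ B, (insert k (B.erase i)).card = r + 1 := by
    intro i hi
    rw [Finset.card_insert_of_notMem (hkB i hi), Finset.card_erase_of_mem hi, hB]
    omega
  -- key determinant identity
  have key : ∀ i ∈ B, valMat val f (insert k (B.erase i)) =
      val (lam i) + valMat val f B := by
    intro i hi
    set e := B.orderIsoOfFin hB with he
    set A : Finset (Fin (n + 1)) := insert k (B.erase i) with hA
    have hAcard : A.card = r + 1 := hcard' i hi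
    set j0 : Fin (r + 1) := e.symm ⟨i, hi⟩ with hj0
    have hej0 : (e j0 : Fin (n + 1)) = i := by rw [hj0, OrderIso.apply_symm_apply]
    -- σ₂ : the rows of B with row i replaced by k
    set σ₂ : Fin (r + 1) → Fin (n + 1) := fun j => if j = j0 then k else (e j : _) with hσ₂
    have hσB : Function.Injective (fun j => ((e j : Fin (n + 1)))) := by
      intro a b hab
      exact e.injective (Subtype.ext hab)
    have h2 : Function.Injective σ₂ := by
      intro a b hab
      simp only [hσ₂] at hab
      split_ifs at hab with h h' h'
      · rw [h, h']
      · exfalso; apply hk; rw [hab]; exact (e b).2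
      · exfalso; apply hk; rw [← hab]; exact (e a).2
      · exact hσB hab
    have hrange2 : Set.range σ₂ = (A : Set (Fin (n + 1))) := by
      ext x
      simp only [Set.mem_range, hσ₂, hA, Finset.coe_insert, Set.mem_insert_iff,
        Finset.coe_erase, Set.mem_diff, Finset.mem_coe]
      constructor
      · rintro ⟨j, hj⟩
        by_cases h : j = j0
        · simp [h] at hj; exact Or.inl hj.symm
        · simp [h] at hj
          right
          refine ⟨hj ▸ (e j).2, ?_⟩
          simp only [Set.mem_singleton_iff]
          intro hx
          exact h (e.injective (Subtype.ext (by rw [hj, hx, hej0])) : j = j0)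
      · rintro (h | ⟨hxB, hxi⟩)
        · exact ⟨j0, by simp [h]⟩
        · refine ⟨e.symm ⟨x, hxB⟩, ?_⟩
          have hne : e.symm ⟨x, hxB⟩ ≠ j0 := by
            intro hh
            apply hxi
            have := congrArg e hh
            rw [OrderIso.apply_symm_apply, OrderIso.apply_symm_apply] at this
            simpa using congrArg Subtype.val this
          simp [hne]
    -- row expansion
    have hσ₂row : (Function.update (fun j => f (e j : Fin (n + 1))) j0 (f k)) =
        fun j => f (σ₂ j) := by
      funext j
      by_cases h : j = j0
      · subst h; simp [hσ₂]
      · simp [Function.update, h, hσ₂]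
    have hfk : f k = ∑ j : Fin (r + 1), lam (e j : Fin (n + 1)) • f (e j : Fin (n + 1)) := by
      rw [hrep, ← Finset.sum_coe_sort B (fun b => lam b • f b)]
      exact (Fintype.sum_equiv e.toEquiv (fun j => lam (e j : Fin (n + 1)) • f (e j : Fin (n + 1)))
        (fun b => lam (b : Fin (n + 1)) • f (b : Fin (n + 1))) (fun j => rfl)).symm
    have hdet : rowsDet f σ₂ = lam i * rowsDet f (fun j => (e j : Fin (n + 1))) := by
      have h1 : rowsDet f σ₂ =
          Matrix.detRowAlternating (Function.update (fun j => f (e j : Fin (n + 1))) j0 (f k)) := by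
        rw [hσ₂row]; rfl
      rw [h1, hfk, AlternatingMap.map_update_sum]
      rw [Finset.sum_eq_single j0]
      · rw [AlternatingMap.map_update_smul, Function.update_eq_self, hej0, smul_eq_mul]
        rfl
      · intro j _ hj
        rw [AlternatingMap.map_update_smul]
        rw [AlternatingMap.map_eq_zero_of_eq _ _
          (i := j) (j := j0) (by simp [Function.update_apply, hj]) hj,
          smul_zero]
      · intro h; exact absurd (Finset.mem_univ j0) h
    -- now compare with the sorted order of A
    have h1inj : Function.Injective (fun j => ((A.orderIsoOfFin hAcard j : Fin (n + 1)))) := by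
      intro a b hab
      exact (A.orderIsoOfFin hAcard).injective (Subtype.ext hab)
    have hrange1 : Set.range (fun j => ((A.orderIsoOfFin hAcard j : Fin (n + 1)))) =
        (A : Set (Fin (n + 1))) := by
      have := Finset.range_orderEmbOfFin A hAcard
      rw [← this]
      rfl
    have hcmp := val_rowsDet_range_eq val hval1 hvalmul f
      (fun j => ((A.orderIsoOfFin hAcard j : Fin (n + 1)))) σ₂ h1inj
      (hrange1.trans hrange2.symm) h2
    rw [valMat_eq_rowsDet val f A hAcard, ← hcmp, hdet, hvalmul,
      valMat_eq_rowsDet val f B hB]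
  obtain ⟨c, hc⟩ := WithTop.ne_top_iff_exists.mp hBbase
  -- the minimality of the k-term, from the initial-matroid condition
  have hmin : ∀ i ∈ B, ((c : WithTop ℝ) + (u k : WithTop ℝ) : WithTop ℝ) ≤
      val (lam i) + (c : WithTop ℝ) + (u i : WithTop ℝ) := by
    intro i hi
    rcases eq_or_ne (val (lam i)) ⊤ with hv | hv
    · rw [hv, top_add, top_add]; exact le_top
    · obtain ⟨v, hv'⟩ := WithTop.ne_top_iff_exists.mp hv
      have h := hinit (insert k (B.erase i)) (hcard' i hi)
      rw [key i hi, ← hc, ← hv'] at h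
      have hsum : (∑ x ∈ insert k (B.erase i), u x) =
          u k + ((∑ x ∈ B, u x) - u i) := by
        rw [Finset.sum_insert (hkB i hi)]
        congr 1
        exact eq_sub_of_add_eq (Finset.sum_erase_add B u hi)
      rw [hsum] at h
      rw [← hv']
      have h' : c + (u k + ((∑ x ∈ B, u x) - u i)) ≤ v + c + (∑ x ∈ B, u x) := by
        exact_mod_cast h
      have h'' : c + u k ≤ v + c + u i := by linarith
      exact_mod_cast h''
  have hek : (insert k B).erase k = B := Finset.erase_insert hk
  have hei : ∀ i ∈ B, (insert k B).erase i = insert k (B.erase i) := by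
    intro i hi
    exact Finset.erase_insert_of_ne (fun h => hk (h ▸ hi))
  have hτcard : (insert k B).card = r + 2 := by
    rw [Finset.card_insert_of_notMem hk, hB]
  have hGk : valMat val f ((insert k B).erase k) + (u k : WithTop ℝ) =
      (c : WithTop ℝ) + (u k : WithTop ℝ) := by rw [hek, ← hc]
  have hGi : ∀ i ∈ B, valMat val f ((insert k B).erase i) + (u i : WithTop ℝ) =
      val (lam i) + (c : WithTop ℝ) + (u i : WithTop ℝ) := by
    intro i hi
    rw [hei i hi, key i hi, ← hc]
  have hGkne : (c : WithTop ℝ) + (u k : WithTop ℝ) ≠ ⊤ :=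
    WithTop.add_ne_top.mpr ⟨WithTop.coe_ne_top, WithTop.coe_ne_top⟩
  have hminτ : ∀ e' ∈ insert k B,
      (c : WithTop ℝ) + (u k : WithTop ℝ) ≤
        valMat val f ((insert k B).erase e') + (u e' : WithTop ℝ) := by
    intro e' he'
    rcases Finset.mem_insert.mp he' with h | h
    · subst h; rw [hGk]
    · rw [hGi e' h]; exact hmin e' h
  rcases htrop (insert k B) hτcard with hall | ⟨e₁, he₁, e₂, he₂, hne, heq, hfin, hle⟩
  · exfalso
    have := hall k (Finset.mem_insert_self k B)
    dsimp only at this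
    rw [hGk] at this
    exact hGkne this
  · dsimp only at heq hfin hle
    -- the value at e₁ coincides with the minimal value c + u k
    have hgke₁ : (c : WithTop ℝ) + (u k : WithTop ℝ) =
        valMat val f ((insert k B).erase e₁) + (u e₁ : WithTop ℝ) := by
      refine le_antisymm (hminτ e₁ he₁) ?_
      have := hle k (Finset.mem_insert_self k B)
      rw [hGk] at this
      exact this
    -- find i ∈ B achieving the minimum
    obtain ⟨i, hiB, hgi_eq⟩ : ∃ i ∈ B, (c : WithTop ℝ) + (u k : WithTop ℝ) =
        valMat val f ((insert k B).erase i) + (u i : WithTop ℝ) := by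
      rcases eq_or_ne e₁ k with h | h
      · refine ⟨e₂, ?_, hgke₁.trans heq⟩
        rcases Finset.mem_insert.mp he₂ with h' | h'
        · exact absurd (h.trans h'.symm) hne
        · exact h'
      · refine ⟨e₁, ?_, hgke₁⟩
        rcases Finset.mem_insert.mp he₁ with h' | h'
        · exact absurd h' h
        · exact h'
    rw [hGi i hiB] at hgi_eq
    -- val (lam i) is finite
    have hvi : val (lam i) ≠ ⊤ := by
      intro hvi
      rw [hvi, top_add, top_add] at hgi_eq
      exact hGkne hgi_eq
    obtain ⟨v, hv'⟩ := WithTop.ne_top_iff_exists.mp hvi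
    have hukeq : (u k : WithTop ℝ) = val (lam i) + (u i : WithTop ℝ) := by
      rw [← hv'] at hgi_eq ⊢
      have h' : c + u k = v + c + u i := by exact_mod_cast hgi_eq
      have h'' : u k = v + u i := by linarith
      exact_mod_cast h''
    refine le_antisymm ?_ ?_
    · refine Finset.le_inf' _ _ fun i' hi' => ?_
      rcases eq_or_ne (val (lam i')) ⊤ with hv2 | hv2
      · rw [hv2, top_add]; exact le_top
      · obtain ⟨v', hv2'⟩ := WithTop.ne_top_iff_exists.mp hv2
        have h := hmin i' hi'
        rw [← hv2'] at h ⊢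
        have h' : c + u k ≤ v' + c + u i' := by exact_mod_cast h
        have h'' : u k ≤ v' + u i' := by linarith
        exact_mod_cast h''
    · calc B.inf' _ (fun i' => val (lam i') + (u i' : WithTop ℝ)) ≤
          val (lam i) + (u i : WithTop ℝ) := Finset.inf'_le _ hiB
        _ = (u k : WithTop ℝ) := hukeq.symm
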